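/- Let p ≥ 2, let X have an elliptical distribution F ∈ E_p(μ,V) on ℝ^p, and let V = U Λ U^T be an eigenvalue decomposition of V with U orthogonal and Λ = diag(λ_1,…,λ_p), 0 < λ_p ≤ … ≤ λ_1. Then the spatial sign covariance matrix satisfies S(F) = U Δ U^T, where Δ = diag(δ_1,…,δ_p) is diagonal with 0 < δ_p ≤ … ≤ δ_1. -/

import Mathlib

open MeasureTheory Matrix Real

/-- The spatial sign s(x) = x/‖x‖ for x ≠ 0, and s(0) = 0. -/
noncomputable def ssign {p : ℕ} (x : EuclideanSpace ℝ (Fin p)) : EuclideanSpace ℝ (Fin p) :=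
  haveI := Classical.propDecidable (x = 0)
  if x = 0 then 0 else ‖x‖⁻¹ • x

namespace SSCM

variable {p : ℕ}

lemma ssign_zero : ssign (0 : EuclideanSpace ℝ (Fin p)) = 0 := by
  unfold ssign; rw [if_pos rfl]

lemma ssign_of_ne {x : EuclideanSpace ℝ (Fin p)} (h : x ≠ 0) : ssign x = ‖x‖⁻¹ • x := by
  unfold ssign; rw [if_neg h]

lemma measurable_ssign : Measurable (ssign (p := p)) := by
  unfold ssign
  refine Measurable.ite ?_ measurable_const ((measurable_norm.inv).smul measurable_id)
  have h : {x : EuclideanSpace ℝ (Fin p) | x = 0} = {0} := by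
    ext x; simp [Set.mem_singleton_iff]
  rw [h]
  exact MeasurableSet.singleton 0

lemma norm_sq_eq (v : EuclideanSpace ℝ (Fin p)) : ‖v‖ ^ 2 = ∑ i, (v i) ^ 2 := by
  rw [EuclideanSpace.norm_eq, Real.sq_sqrt (by positivity)]
  simp [Real.norm_eq_abs, sq_abs]

lemma abs_apply_le_norm (v : EuclideanSpace ℝ (Fin p)) (m : Fin p) : |v m| ≤ ‖v‖ := by
  have h1 : (v m) ^ 2 ≤ ∑ i, (v i) ^ 2 :=
    Finset.single_le_sum (fun i _ => sq_nonneg (v i)) (Finset.mem_univ m)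
  have h2 := norm_sq_eq v
  nlinarith [abs_nonneg (v m), norm_nonneg v, sq_abs (v m)]

lemma abs_ssign_le (v : EuclideanSpace ℝ (Fin p)) (m : Fin p) : |ssign v m| ≤ 1 := by
  by_cases h : v = 0
  · subst h; rw [ssign_zero]; norm_num
  · rw [ssign_of_ne h]
    have : (‖v‖⁻¹ • v) m = ‖v‖⁻¹ * v m := rfl
    rw [this, abs_mul, abs_inv, abs_norm]
    calc ‖v‖⁻¹ * |v m| ≤ ‖v‖⁻¹ * ‖v‖ :=
          mul_le_mul_of_nonneg_left (abs_apply_le_norm v m) (by positivity)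
      _ = 1 := inv_mul_cancel₀ (norm_ne_zero_iff.mpr h)

lemma ssign_mul_self {v : EuclideanSpace ℝ (Fin p)} (hv : v ≠ 0) (m : Fin p) :
    ssign v m * ssign v m = (v m) ^ 2 / ‖v‖ ^ 2 := by
  rw [ssign_of_ne hv]
  have : (‖v‖⁻¹ • v) m = ‖v‖⁻¹ * v m := rfl
  rw [this]
  have hn : ‖v‖ ≠ 0 := norm_ne_zero_iff.mpr hv
  field_simp

lemma ssign_isometry (T : EuclideanSpace ℝ (Fin p) ≃ₗᵢ[ℝ] EuclideanSpace ℝ (Fin p))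
    (y : EuclideanSpace ℝ (Fin p)) : ssign (T y) = T (ssign y) := by
  by_cases h : y = 0
  · simp [h, ssign_zero]
  · have hTy : T y ≠ 0 := fun hc => h (by simpa using T.map_eq_zero_iff.mp hc)
    rw [ssign_of_ne h, ssign_of_ne hTy, T.norm_map]
    exact (T.map_smul _ _).symm

/-- Linear equivalence of Euclidean space induced by a matrix with a two-sided inverse. -/
noncomputable def matLinEquiv (A B : Matrix (Fin p) (Fin p) ℝ) (h1 : A * B = 1) (h2 : B * A = 1) :
    EuclideanSpace ℝ (Fin p) ≃ₗ[ℝ] EuclideanSpace ℝ (Fin p) where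
  toFun x := WithLp.toLp 2 (A.mulVec x)
  invFun x := WithLp.toLp 2 (B.mulVec x)
  left_inv x := by show WithLp.toLp 2 (B *ᵥ (A *ᵥ x.ofLp)) = x; rw [Matrix.mulVec_mulVec, h2, Matrix.one_mulVec, WithLp.toLp_ofLp]
  right_inv x := by show WithLp.toLp 2 (A *ᵥ (B *ᵥ x.ofLp)) = x; rw [Matrix.mulVec_mulVec, h1, Matrix.one_mulVec, WithLp.toLp_ofLp]
  map_add' x y := congrArg (WithLp.toLp 2) (Matrix.mulVec_add A x y)
  map_smul' c x := congrArg (WithLp.toLp 2) (A.mulVec_smul c x)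

lemma matLinEquiv_apply (A B : Matrix (Fin p) (Fin p) ℝ) (h1 : A * B = 1) (h2 : B * A = 1)
    (x : EuclideanSpace ℝ (Fin p)) (i : Fin p) :
    matLinEquiv A B h1 h2 x i = A.mulVec x i := rfl

lemma dot_orth {A : Matrix (Fin p) (Fin p) ℝ} (h2 : Aᵀ * A = 1) (v w : Fin p → ℝ) :
    (A *ᵥ v) ⬝ᵥ (A *ᵥ w) = v ⬝ᵥ w := by
  have h3 := Matrix.vecMul_transpose (A := Aᵀ) (A *ᵥ v)
  rw [Matrix.transpose_transpose] at h3
  rw [Matrix.dotProduct_mulVec, h3, Matrix.mulVec_mulVec, h2, Matrix.one_mulVec]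

/-- Linear isometry equivalence of Euclidean space induced by an orthogonal matrix. -/
noncomputable def orthIso (A : Matrix (Fin p) (Fin p) ℝ) (h1 : A * Aᵀ = 1) :
    EuclideanSpace ℝ (Fin p) ≃ₗᵢ[ℝ] EuclideanSpace ℝ (Fin p) :=
  { matLinEquiv A Aᵀ h1 (mul_eq_one_comm.mp h1) with
    norm_map' := fun x => by
      have h2 : Aᵀ * A = 1 := mul_eq_one_comm.mp h1
      have hd : (A *ᵥ x) ⬝ᵥ (A *ᵥ x) = x ⬝ᵥ x := dot_orth h2 x x
      show ‖(matLinEquiv A Aᵀ h1 (mul_eq_one_comm.mp h1)) x‖ = ‖x‖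
      rw [EuclideanSpace.norm_eq, EuclideanSpace.norm_eq]
      congr 1
      have e1 : ∀ i, ‖(matLinEquiv A Aᵀ h1 (mul_eq_one_comm.mp h1)) x i‖ ^ 2
          = (A *ᵥ x) i * (A *ᵥ x) i := by
        intro i; rw [matLinEquiv_apply]; rw [Real.norm_eq_abs, sq_abs, sq]
      have e2 : ∀ i, ‖x i‖ ^ 2 = x i * x i := by
        intro i; rw [Real.norm_eq_abs, sq_abs, sq]
      simp only [e1, e2]
      exact hd }

lemma orthIso_apply (A : Matrix (Fin p) (Fin p) ℝ) (h1 : A * Aᵀ = 1)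
    (x : EuclideanSpace ℝ (Fin p)) (i : Fin p) :
    orthIso A h1 x i = ∑ k, A i k * x k := rfl

lemma map_withDensity_equiv {α β : Type*} [MeasurableSpace α] [MeasurableSpace β]
    (e : α ≃ᵐ β) (μ : Measure α) (f : α → ENNReal) :
    Measure.map e (μ.withDensity f) = (Measure.map e μ).withDensity (f ∘ e.symm) := by
  ext s hs
  rw [Measure.map_apply e.measurable hs, withDensity_apply _ (e.measurable hs),
    withDensity_apply _ hs, Measure.restrict_map e.measurable hs,
    MeasureTheory.lintegral_map_equiv (fun b => (f ∘ e.symm) b) e]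
  simp

lemma key_ineq (α β A B R : ℝ) (hβ : 0 < β) (hβα : β ≤ α) (hA : 0 ≤ A) (hB : 0 ≤ B)
    (hR : 0 ≤ R) (hD : 0 < α * A + β * B + R) (hD' : 0 < α * B + β * A + R) :
    β * B / (α * A + β * B + R) + β * A / (α * B + β * A + R) ≤
      α * A / (α * A + β * B + R) + α * B / (α * B + β * A + R) := by
  set D := α * A + β * B + R with hDdef
  set D' := α * B + β * A + R with hD'def
  have hnum : (β * B - α * A) * D' + (β * A - α * B) * D ≤ 0 := by
    rw [hDdef, hD'def]
    nlinarith [mul_nonneg (mul_nonneg hA hB) (sub_nonneg.mpr hβα),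
      mul_nonneg (mul_nonneg hR (sub_nonneg.mpr hβα)) (add_nonneg hA hB),
      mul_nonneg (mul_nonneg (mul_nonneg hA hB) (sub_nonneg.mpr hβα)) (add_nonneg hβ.le (hβ.trans_le hβα).le)]
  have h1 : β * B / D + β * A / D' - (α * A / D + α * B / D') =
      ((β * B - α * A) * D' + (β * A - α * B) * D) / (D * D') := by
    field_simp
    ring
  have h2 : ((β * B - α * A) * D' + (β * A - α * B) * D) / (D * D') ≤ 0 :=
    div_nonpos_iff.mpr (Or.inr ⟨hnum, (mul_pos hD hD').le⟩)
  linarith [h1 ▸ h2]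

end SSCM

theorem sscm_eigendecomposition
    {p : ℕ} (hp : 2 ≤ p)
    (μ : EuclideanSpace ℝ (Fin p)) (V : Matrix (Fin p) (Fin p) ℝ) (hV : V.PosDef)
    (g : ℝ → ℝ) (hg : ∀ t, 0 ≤ t → 0 ≤ g t)
    (F : Measure (EuclideanSpace ℝ (Fin p))) [IsProbabilityMeasure F]
    (hF : F = volume.withDensity fun x => ENNReal.ofReal
        ((Real.sqrt V.det)⁻¹ * g (∑ i, ∑ j, (x i - μ i) * V⁻¹ i j * (x j - μ j))))
    (U : Matrix (Fin p) (Fin p) ℝ) (hU : U * Uᵀ = 1)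
    (lam : Fin p → ℝ) (hpos : ∀ i, 0 < lam i)
    (hmono : ∀ i j : Fin p, i ≤ j → lam j ≤ lam i)
    (hVdec : V = U * Matrix.diagonal lam * Uᵀ) :
    ∃ δ : Fin p → ℝ, (∀ i, 0 < δ i) ∧ (∀ i j : Fin p, i ≤ j → δ j ≤ δ i) ∧
      (Matrix.of fun i j => ∫ x, ssign (x - μ) i * ssign (x - μ) j ∂F)
        = U * Matrix.diagonal δ * Uᵀ := by
  classical
  have hlamne : ∀ k, lam k ≠ 0 := fun k => (hpos k).ne'
  have hsqpos : ∀ k, 0 < Real.sqrt (lam k) := fun k => Real.sqrt_pos.mpr (hpos k)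
  have hU2 : Uᵀ * U = 1 := mul_eq_one_comm.mp hU
  -- inverse of V
  have hVinv : V⁻¹ = U * Matrix.diagonal (fun k => (lam k)⁻¹) * Uᵀ := by
    apply Matrix.inv_eq_right_inv
    rw [hVdec]
    calc U * Matrix.diagonal lam * Uᵀ * (U * Matrix.diagonal (fun k => (lam k)⁻¹) * Uᵀ)
        = U * (Matrix.diagonal lam * ((Uᵀ * U) * Matrix.diagonal (fun k => (lam k)⁻¹))) * Uᵀ := by
          simp only [Matrix.mul_assoc]
      _ = U * (Matrix.diagonal lam * Matrix.diagonal (fun k => (lam k)⁻¹)) * Uᵀ := by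
          rw [hU2, Matrix.one_mul]
      _ = 1 := by
          rw [Matrix.diagonal_mul_diagonal]
          have h : (fun i => lam i * (lam i)⁻¹) = fun _ : Fin p => (1:ℝ) :=
            funext fun k => mul_inv_cancel₀ (hlamne k)
          rw [h, Matrix.diagonal_one, Matrix.mul_one, hU]
  -- the scaling equivalence
  have hd1 : Matrix.diagonal (fun k => Real.sqrt (lam k)) *
      Matrix.diagonal (fun k => (Real.sqrt (lam k))⁻¹) = 1 := by
    rw [Matrix.diagonal_mul_diagonal]
    have h : (fun i => Real.sqrt (lam i) * (Real.sqrt (lam i))⁻¹) = fun _ : Fin p => (1:ℝ) :=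
      funext fun k => mul_inv_cancel₀ (hsqpos k).ne'
    rw [h, Matrix.diagonal_one]
  set De := SSCM.matLinEquiv (Matrix.diagonal fun k => Real.sqrt (lam k))
      (Matrix.diagonal fun k => (Real.sqrt (lam k))⁻¹) hd1 (mul_eq_one_comm.mp hd1) with hDedef
  have hDe : ∀ (z : EuclideanSpace ℝ (Fin p)) k, De z k = Real.sqrt (lam k) * z k :=
    fun z k => (SSCM.matLinEquiv_apply _ _ hd1 (mul_eq_one_comm.mp hd1) z k).trans
      (Matrix.mulVec_diagonal _ _ _)
  set Ue := SSCM.orthIso U hU with hUedef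
  -- measurable equivalences
  set Dm : EuclideanSpace ℝ (Fin p) ≃ᵐ EuclideanSpace ℝ (Fin p) :=
    De.toContinuousLinearEquiv.toHomeomorph.toMeasurableEquiv with hDmdef
  set Um : EuclideanSpace ℝ (Fin p) ≃ᵐ EuclideanSpace ℝ (Fin p) :=
    Ue.toHomeomorph.toMeasurableEquiv with hUmdef
  set Tm : EuclideanSpace ℝ (Fin p) ≃ᵐ EuclideanSpace ℝ (Fin p) :=
    (Homeomorph.addLeft μ).toMeasurableEquiv with hTmdef
  set Φ : EuclideanSpace ℝ (Fin p) ≃ᵐ EuclideanSpace ℝ (Fin p) :=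
    Dm.trans (Um.trans Tm) with hPhidef
  have hPhi : ∀ z, Φ z = μ + Ue (De z) := fun z => rfl
  -- the transported measure
  set F2 : Measure (EuclideanSpace ℝ (Fin p)) := Measure.map (⇑Φ.symm) F with hF2def
  haveI hF2prob : IsProbabilityMeasure F2 :=
    Measure.isProbabilityMeasure_map Φ.symm.measurable.aemeasurable
  have hFback : Measure.map (⇑Φ) F2 = F := by
    rw [hF2def]
    simpa using MeasurableEquiv.map_symm_map (Φ.symm) (μ := F)
  -- pushforward of volume
  obtain ⟨a, ha⟩ : ∃ a : ENNReal,
      Measure.map (⇑Φ.symm) (volume : Measure (EuclideanSpace ℝ (Fin p))) = a • volume := by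
    have hcoe : (⇑Φ.symm : EuclideanSpace ℝ (Fin p) → EuclideanSpace ℝ (Fin p))
        = (⇑Dm.symm) ∘ ((⇑Um.symm) ∘ (⇑Tm.symm)) := rfl
    have h3 : Measure.map (⇑Tm.symm) (volume : Measure (EuclideanSpace ℝ (Fin p))) = volume := by
      have he : (⇑Tm.symm : EuclideanSpace ℝ (Fin p) → EuclideanSpace ℝ (Fin p))
          = fun x => -μ + x := rfl
      rw [he]
      exact (measurePreserving_add_left volume (-μ)).map_eq
    have h2 : Measure.map (⇑Um.symm) (volume : Measure (EuclideanSpace ℝ (Fin p))) = volume :=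
      Ue.symm.measurePreserving.map_eq
    have h1 : Measure.map (⇑Dm.symm) (volume : Measure (EuclideanSpace ℝ (Fin p)))
        = ENNReal.ofReal
            |(LinearMap.det (De.symm : EuclideanSpace ℝ (Fin p) →ₗ[ℝ] EuclideanSpace ℝ (Fin p)))⁻¹|
          • volume := by
      have he : (⇑Dm.symm : EuclideanSpace ℝ (Fin p) → EuclideanSpace ℝ (Fin p))
          = ⇑(De.symm : EuclideanSpace ℝ (Fin p) →ₗ[ℝ] EuclideanSpace ℝ (Fin p)) := rfl
      rw [he]
      exact Measure.map_linearMap_addHaar_eq_smul_addHaar volume De.symm.isUnit_det'.ne_zero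
    refine ⟨ENNReal.ofReal
      |(LinearMap.det (De.symm : EuclideanSpace ℝ (Fin p) →ₗ[ℝ] EuclideanSpace ℝ (Fin p)))⁻¹|, ?_⟩
    rw [hcoe, ← Measure.map_map Dm.symm.measurable (Um.symm.measurable.comp Tm.symm.measurable),
      ← Measure.map_map Um.symm.measurable Tm.symm.measurable, h3, h2, h1]
  -- density of F2
  set ρ2 : EuclideanSpace ℝ (Fin p) → ENNReal :=
    fun z => ENNReal.ofReal ((Real.sqrt V.det)⁻¹ * g (∑ k, (z k)^2)) with hρ2def
  have hq : ∀ z : EuclideanSpace ℝ (Fin p),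
      (∑ i, ∑ j, ((Φ z) i - μ i) * V⁻¹ i j * ((Φ z) j - μ j)) = ∑ k, (z k)^2 := by
    intro z
    have hco : ∀ i, (Φ z) i - μ i = (U *ᵥ (De z : Fin p → ℝ)) i := by
      intro i
      rw [hPhi z]
      have h1 : (μ + Ue (De z)) i = μ i + (Ue (De z)) i := rfl
      rw [h1]
      have h2 : (Ue (De z)) i = (U *ᵥ (De z : Fin p → ℝ)) i := rfl
      rw [h2]; ring
    calc (∑ i, ∑ j, ((Φ z) i - μ i) * V⁻¹ i j * ((Φ z) j - μ j))
        = ∑ i, ∑ j, (U *ᵥ (De z : Fin p → ℝ)) i * V⁻¹ i j * (U *ᵥ (De z : Fin p → ℝ)) j :=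
          Finset.sum_congr rfl fun i _ => Finset.sum_congr rfl fun j _ => by rw [hco i, hco j]
      _ = (U *ᵥ (De z : Fin p → ℝ)) ⬝ᵥ (V⁻¹ *ᵥ (U *ᵥ (De z : Fin p → ℝ))) := by
          simp [dotProduct, Matrix.mulVec, Finset.mul_sum, mul_assoc]
      _ = (U *ᵥ (De z : Fin p → ℝ)) ⬝ᵥ
            ((U * Matrix.diagonal (fun k => (lam k)⁻¹)) *ᵥ (De z : Fin p → ℝ)) := by
          have hmm : U * Matrix.diagonal (fun k => (lam k)⁻¹) * Uᵀ * U
              = U * Matrix.diagonal (fun k => (lam k)⁻¹) := by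
            calc U * Matrix.diagonal (fun k => (lam k)⁻¹) * Uᵀ * U
                = U * Matrix.diagonal (fun k => (lam k)⁻¹) * (Uᵀ * U) := by
                  simp only [Matrix.mul_assoc]
              _ = U * Matrix.diagonal (fun k => (lam k)⁻¹) := by rw [hU2, Matrix.mul_one]
          rw [hVinv, Matrix.mulVec_mulVec, hmm]
      _ = (U *ᵥ (De z : Fin p → ℝ)) ⬝ᵥ
            (U *ᵥ (Matrix.diagonal (fun k => (lam k)⁻¹) *ᵥ (De z : Fin p → ℝ))) := by
          rw [Matrix.mulVec_mulVec]
      _ = (De z : Fin p → ℝ) ⬝ᵥ (Matrix.diagonal (fun k => (lam k)⁻¹) *ᵥ (De z : Fin p → ℝ)) :=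
          SSCM.dot_orth hU2 _ _
      _ = ∑ k, (z k)^2 := by
          simp only [dotProduct]
          apply Finset.sum_congr rfl
          intro k _
          rw [Matrix.mulVec_diagonal]
          have h1 : (De z : Fin p → ℝ) k = Real.sqrt (lam k) * z k := hDe z k
          rw [h1, show Real.sqrt (lam k) * z k * ((lam k)⁻¹ * (Real.sqrt (lam k) * z k))
              = (Real.sqrt (lam k) * Real.sqrt (lam k)) * (lam k)⁻¹ * (z k * z k) from by ring,
            Real.mul_self_sqrt (hpos k).le, mul_inv_cancel₀ (hlamne k), one_mul, ← sq]
  have hF2rep : F2 = (a • volume).withDensity ρ2 := by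
    rw [hF2def, hF, SSCM.map_withDensity_equiv Φ.symm volume _, ha]
    congr 1
    funext z
    show ENNReal.ofReal ((Real.sqrt V.det)⁻¹
        * g (∑ i, ∑ j, ((Φ.symm.symm z) i - μ i) * V⁻¹ i j * ((Φ.symm.symm z) j - μ j))) = ρ2 z
    rw [MeasurableEquiv.symm_symm, hρ2def]
    simp only []
    rw [hq z]
  -- invariance principle
  have hinv : ∀ (σ : EuclideanSpace ℝ (Fin p) ≃ₗᵢ[ℝ] EuclideanSpace ℝ (Fin p)),
      (∀ z, ∑ k, ((σ.symm z) k)^2 = ∑ k, (z k)^2) →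
      ∀ (f : EuclideanSpace ℝ (Fin p) → ℝ), ∫ z, f z ∂F2 = ∫ z, f (σ z) ∂F2 := by
    intro σ hσ f
    have hmap : Measure.map (⇑σ.toHomeomorph.toMeasurableEquiv) F2 = F2 := by
      rw [hF2rep, SSCM.map_withDensity_equiv σ.toHomeomorph.toMeasurableEquiv _ ρ2]
      have hvol : Measure.map (⇑σ.toHomeomorph.toMeasurableEquiv)
          (a • (volume : Measure (EuclideanSpace ℝ (Fin p)))) = a • volume := by
        rw [Measure.map_smul]
        congr 1
        exact σ.measurePreserving.map_eq
      rw [hvol]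
      congr 1
      funext z
      show ρ2 (σ.toHomeomorph.toMeasurableEquiv.symm z) = ρ2 z
      have he : σ.toHomeomorph.toMeasurableEquiv.symm z = σ.symm z := rfl
      rw [he, hρ2def]
      simp only []
      rw [hσ z]
    conv_lhs => rw [← hmap]
    exact MeasureTheory.integral_map_equiv σ.toHomeomorph.toMeasurableEquiv f
  -- measurability and integrability
  have hsk_meas : ∀ k, Measurable (fun z : EuclideanSpace ℝ (Fin p) => ssign (De z) k) :=
    fun k => (measurable_pi_apply k).comp ((WithLp.measurable_ofLp _ _).comp (SSCM.measurable_ssign.comp Dm.measurable))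
  have hintF2 : ∀ (f : EuclideanSpace ℝ (Fin p) → ℝ), Measurable f → (∀ z, |f z| ≤ (1:ℝ)) →
      Integrable f F2 := by
    intro f hm hb
    exact ⟨hm.aestronglyMeasurable,
      MeasureTheory.HasFiniteIntegral.of_bounded (C := (1:ℝ))
        (Filter.Eventually.of_forall (fun z => by simpa [Real.norm_eq_abs] using hb z))⟩
  have habs : ∀ (v : EuclideanSpace ℝ (Fin p)) k l, |ssign v k * ssign v l| ≤ 1 := by
    intro v k l
    rw [abs_mul]
    calc |ssign v k| * |ssign v l| ≤ 1 * 1 :=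
        mul_le_mul (SSCM.abs_ssign_le v k) (SSCM.abs_ssign_le v l) (abs_nonneg _) zero_le_one
      _ = 1 := one_mul 1
  have hprod_int : ∀ k l, Integrable (fun z => ssign (De z) k * ssign (De z) l) F2 :=
    fun k l => hintF2 _ ((hsk_meas k).mul (hsk_meas l)) (fun z => habs (De z) k l)
  have hnormDe : ∀ z : EuclideanSpace ℝ (Fin p), ‖De z‖^2 = ∑ m, lam m * (z m)^2 := by
    intro z
    rw [SSCM.norm_sq_eq]
    exact Finset.sum_congr rfl fun m _ => by
      rw [hDe, mul_pow, Real.sq_sqrt (hpos m).le]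
  -- off-diagonal entries vanish
  have hNoff : ∀ k l, k ≠ l → (∫ z, ssign (De z) k * ssign (De z) l ∂F2) = 0 := by
    intro k l hkl
    set σ : EuclideanSpace ℝ (Fin p) ≃ₗᵢ[ℝ] EuclideanSpace ℝ (Fin p) :=
      LinearIsometryEquiv.piLpCongrRight 2
        (fun m : Fin p => if m = k then LinearIsometryEquiv.neg ℝ
          else LinearIsometryEquiv.refl ℝ ℝ) with hσdef
    have hσc : ∀ (v : EuclideanSpace ℝ (Fin p)) m, σ v m = if m = k then -(v m) else v m := by
      intro v m
      rw [hσdef]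
      rcases eq_or_ne m k with rfl | h
      · simp [LinearIsometryEquiv.piLpCongrRight_apply]
      · simp [LinearIsometryEquiv.piLpCongrRight_apply, h]
    have hσinvol : ∀ v, σ (σ v) = v := by
      intro v
      ext m
      rw [hσc, hσc]
      by_cases h : m = k <;> simp [h]
    have hσsymm : ∀ v, σ.symm v = σ v := by
      intro v
      conv_lhs => rw [← hσinvol v]
      rw [σ.symm_apply_apply]
    have hρinv : ∀ z : EuclideanSpace ℝ (Fin p), ∑ m, ((σ.symm z) m)^2 = ∑ m, (z m)^2 := by
      intro z
      refine Finset.sum_congr rfl fun m _ => ?_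
      rw [hσsymm, hσc]
      by_cases h : m = k <;> simp [h]
    have hDeσ : ∀ z, De (σ z) = σ (De z) := by
      intro z
      ext m
      have h1 : De (σ z) m = Real.sqrt (lam m) * (σ z) m := hDe _ m
      have h2 : (σ (De z)) m = if m = k then -(De z m) else De z m := hσc _ m
      rw [h1, h2, hσc, hDe]
      by_cases h : m = k <;> simp [h] <;> ring
    have htrans : ∀ z, ssign (De (σ z)) k * ssign (De (σ z)) l
        = -(ssign (De z) k * ssign (De z) l) := by
      intro z
      rw [hDeσ z, SSCM.ssign_isometry σ (De z)]
      have h1 : (σ (ssign (De z))) k = -(ssign (De z) k) := by rw [hσc]; simp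
      have h2 : (σ (ssign (De z))) l = ssign (De z) l := by rw [hσc]; simp [Ne.symm hkl]
      rw [h1, h2]; ring
    have hN : (∫ z, ssign (De z) k * ssign (De z) l ∂F2)
        = -∫ z, ssign (De z) k * ssign (De z) l ∂F2 := by
      calc (∫ z, ssign (De z) k * ssign (De z) l ∂F2)
          = ∫ z, ssign (De (σ z)) k * ssign (De (σ z)) l ∂F2 :=
            hinv σ hρinv (fun z => ssign (De z) k * ssign (De z) l)
        _ = ∫ z, -(ssign (De z) k * ssign (De z) l) ∂F2 := by simp only [htrans]
        _ = -∫ z, ssign (De z) k * ssign (De z) l ∂F2 := integral_neg _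
    linarith
  -- positivity of the diagonal entries
  have hpos' : ∀ k, 0 < ∫ z, ssign (De z) k * ssign (De z) k ∂F2 := by
    intro k
    have hnn : 0 ≤ ∫ z, ssign (De z) k * ssign (De z) k ∂F2 :=
      integral_nonneg (fun z => mul_self_nonneg _)
    rcases hnn.lt_or_eq with h | h
    · exact h
    exfalso
    have hae : (fun z => ssign (De z) k * ssign (De z) k) =ᶠ[ae F2] 0 :=
      (MeasureTheory.integral_eq_zero_iff_of_nonneg (fun z => mul_self_nonneg _)
        (hprod_int k k)).mp h.symm
    have hne0 : F2 {z | ¬ (ssign (De z) k * ssign (De z) k = (0:ℝ))} = 0 := by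
      have h' : ∀ᵐ z ∂F2, ssign (De z) k * ssign (De z) k = 0 := by
        filter_upwards [hae] with z hz using hz
      exact h'
    have hsub : {z : EuclideanSpace ℝ (Fin p) | z k ≠ 0}
        ⊆ {z | ¬ (ssign (De z) k * ssign (De z) k = (0:ℝ))} := by
      intro z hz
      simp only [Set.mem_setOf_eq] at hz ⊢
      have hDzk : De z k ≠ 0 := by
        rw [hDe]
        exact mul_ne_zero (hsqpos k).ne' hz
      have hDz : De z ≠ 0 := fun hc => hDzk (by rw [hc]; rfl)
      have hs : ssign (De z) k ≠ 0 := by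
        rw [SSCM.ssign_of_ne hDz]
        show ‖De z‖⁻¹ * De z k ≠ 0
        exact mul_ne_zero (inv_ne_zero (norm_ne_zero_iff.mpr hDz)) hDzk
      exact fun hc => hs (mul_self_eq_zero.mp hc)
    have h1 : F2 {z : EuclideanSpace ℝ (Fin p) | z k ≠ 0} = 0 := measure_mono_null hsub hne0
    have hker : volume {z : EuclideanSpace ℝ (Fin p) | z k = 0} = 0 := by
      set l : EuclideanSpace ℝ (Fin p) →ₗ[ℝ] ℝ :=
        (LinearMap.proj k).comp (WithLp.linearEquiv 2 ℝ (Fin p → ℝ)).toLinearMap with hldef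
      have hset : {z : EuclideanSpace ℝ (Fin p) | z k = 0} = (LinearMap.ker l : Set _) := by
        ext z
        simp only [Set.mem_setOf_eq, SetLike.mem_coe, LinearMap.mem_ker]
        exact Iff.rfl
      rw [hset]
      refine Measure.addHaar_submodule volume _ (fun hc => ?_)
      have hmem : EuclideanSpace.single k (1:ℝ) ∈ LinearMap.ker l := by
        rw [hc]; exact Submodule.mem_top
      have heval : l (EuclideanSpace.single k (1:ℝ)) = EuclideanSpace.single k (1:ℝ) k := rfl
      rw [LinearMap.mem_ker, heval, EuclideanSpace.single_apply] at hmem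
      simp at hmem
    have hms : MeasurableSet {z : EuclideanSpace ℝ (Fin p) | z k = 0} :=
      ((measurable_pi_apply k).comp (WithLp.measurable_ofLp _ _)) (measurableSet_singleton 0)
    have h2 : F2 {z : EuclideanSpace ℝ (Fin p) | z k = 0} = 0 := by
      have hzero : (a • (volume : Measure (EuclideanSpace ℝ (Fin p))))
          {z : EuclideanSpace ℝ (Fin p) | z k = 0} = 0 := by
        rw [Measure.smul_apply, hker, smul_zero]
      rw [hF2rep, withDensity_apply _ hms, Measure.restrict_eq_zero.mpr hzero,
        lintegral_zero_measure]
    have hcontr : (1:ENNReal) ≤ 0 := by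
      calc (1:ENNReal) = F2 Set.univ := (measure_univ).symm
        _ ≤ F2 {z : EuclideanSpace ℝ (Fin p) | z k = 0}
            + F2 {z : EuclideanSpace ℝ (Fin p) | z k ≠ 0} := by
            rw [show (Set.univ : Set (EuclideanSpace ℝ (Fin p)))
                = {z : EuclideanSpace ℝ (Fin p) | z k = 0}
                  ∪ {z : EuclideanSpace ℝ (Fin p) | z k ≠ 0} from by
              ext z; by_cases h : z k = 0 <;> simp [h]]
            exact measure_union_le _ _
        _ = 0 := by rw [h1, h2, add_zero]
    exact absurd hcontr (by norm_num)
  -- monotonicity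
  have hmono' : ∀ i0 j0 : Fin p, i0 ≠ j0 → lam j0 ≤ lam i0 →
      (∫ z, ssign (De z) j0 * ssign (De z) j0 ∂F2)
        ≤ ∫ z, ssign (De z) i0 * ssign (De z) i0 ∂F2 := by
    intro i0 j0 hne hle
    set σ : EuclideanSpace ℝ (Fin p) ≃ₗᵢ[ℝ] EuclideanSpace ℝ (Fin p) :=
      LinearIsometryEquiv.piLpCongrLeft 2 ℝ ℝ (Equiv.swap i0 j0) with hσdef
    have hσc : ∀ (v : EuclideanSpace ℝ (Fin p)) m, σ v m = v (Equiv.swap i0 j0 m) := by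
      intro v m
      rw [hσdef]
      simp [LinearIsometryEquiv.piLpCongrLeft_apply, Equiv.piCongrLeft'_apply, Equiv.symm_swap]
    have hσinvol : ∀ v, σ (σ v) = v := by
      intro v
      ext m
      rw [hσc, hσc, Equiv.swap_apply_self]
    have hσsymm : ∀ v, σ.symm v = σ v := by
      intro v
      conv_lhs => rw [← hσinvol v]
      rw [σ.symm_apply_apply]
    have hρinv : ∀ z : EuclideanSpace ℝ (Fin p), ∑ m, ((σ.symm z) m)^2 = ∑ m, (z m)^2 := by
      intro z
      calc ∑ m, ((σ.symm z) m)^2 = ∑ m, (z (Equiv.swap i0 j0 m))^2 :=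
            Finset.sum_congr rfl fun m _ => by rw [hσsymm, hσc]
        _ = ∑ m, (z m)^2 := Equiv.sum_comp (Equiv.swap i0 j0) (fun m => (z m)^2)
    have hpt : ∀ z : EuclideanSpace ℝ (Fin p),
        ssign (De z) j0 * ssign (De z) j0 + ssign (De (σ z)) j0 * ssign (De (σ z)) j0
          ≤ ssign (De z) i0 * ssign (De z) i0 + ssign (De (σ z)) i0 * ssign (De (σ z)) i0 := by
      intro z
      by_cases hz : z = 0
      · subst hz
        have hσ0 : σ (0 : EuclideanSpace ℝ (Fin p)) = 0 := map_zero σ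
        have hDe0 : De (0 : EuclideanSpace ℝ (Fin p)) = 0 := map_zero De
        rw [hσ0, hDe0, SSCM.ssign_zero]
        have hz0 : ∀ m : Fin p, (0 : EuclideanSpace ℝ (Fin p)) m = 0 := fun m => rfl
        rw [hz0 i0, hz0 j0]
      · have hw : De z ≠ 0 := fun hc => hz (De.map_eq_zero_iff.mp hc)
        have hσz : σ z ≠ 0 := fun hc => hz (σ.map_eq_zero_iff.mp hc)
        have hw' : De (σ z) ≠ 0 := fun hc => hσz (De.map_eq_zero_iff.mp hc)
        have hmemj : j0 ∈ Finset.univ.erase i0 :=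
          Finset.mem_erase.mpr ⟨Ne.symm hne, Finset.mem_univ j0⟩
        have hsplit : ∀ f : Fin p → ℝ,
            ∑ m, f m = f i0 + f j0 + ∑ m ∈ (Finset.univ.erase i0).erase j0, f m := by
          intro f
          rw [← Finset.add_sum_erase _ f (Finset.mem_univ i0),
            ← Finset.add_sum_erase _ f hmemj, ← add_assoc]
        have hD : ‖De z‖^2 = lam i0 * (z i0)^2 + lam j0 * (z j0)^2
            + ∑ m ∈ (Finset.univ.erase i0).erase j0, lam m * (z m)^2 := by
          rw [hnormDe z, hsplit (fun m => lam m * (z m)^2)]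
        have hD' : ‖De (σ z)‖^2 = lam i0 * (z j0)^2 + lam j0 * (z i0)^2
            + ∑ m ∈ (Finset.univ.erase i0).erase j0, lam m * (z m)^2 := by
          rw [hnormDe (σ z), hsplit (fun m => lam m * ((σ z) m)^2)]
          congr 1
          · congr 1
            · rw [hσc, Equiv.swap_apply_left]
            · rw [hσc, Equiv.swap_apply_right]
          · refine Finset.sum_congr rfl fun m hm => ?_
            have h1 := Finset.mem_erase.mp hm
            have h2 := Finset.mem_erase.mp h1.2
            rw [hσc, Equiv.swap_apply_of_ne_of_ne h2.1 h1.1]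
        have e1 : ssign (De z) i0 * ssign (De z) i0
            = lam i0 * (z i0)^2 / (lam i0 * (z i0)^2 + lam j0 * (z j0)^2
                + ∑ m ∈ (Finset.univ.erase i0).erase j0, lam m * (z m)^2) := by
          rw [SSCM.ssign_mul_self hw i0, hD]
          congr 1
          rw [hDe, mul_pow, Real.sq_sqrt (hpos i0).le]
        have e2 : ssign (De z) j0 * ssign (De z) j0
            = lam j0 * (z j0)^2 / (lam i0 * (z i0)^2 + lam j0 * (z j0)^2
                + ∑ m ∈ (Finset.univ.erase i0).erase j0, lam m * (z m)^2) := by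
          rw [SSCM.ssign_mul_self hw j0, hD]
          congr 1
          rw [hDe, mul_pow, Real.sq_sqrt (hpos j0).le]
        have e3 : ssign (De (σ z)) i0 * ssign (De (σ z)) i0
            = lam i0 * (z j0)^2 / (lam i0 * (z j0)^2 + lam j0 * (z i0)^2
                + ∑ m ∈ (Finset.univ.erase i0).erase j0, lam m * (z m)^2) := by
          rw [SSCM.ssign_mul_self hw' i0, hD']
          congr 1
          rw [hDe, hσc, Equiv.swap_apply_left, mul_pow, Real.sq_sqrt (hpos i0).le]
        have e4 : ssign (De (σ z)) j0 * ssign (De (σ z)) j0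
            = lam j0 * (z i0)^2 / (lam i0 * (z j0)^2 + lam j0 * (z i0)^2
                + ∑ m ∈ (Finset.univ.erase i0).erase j0, lam m * (z m)^2) := by
          rw [SSCM.ssign_mul_self hw' j0, hD']
          congr 1
          rw [hDe, hσc, Equiv.swap_apply_right, mul_pow, Real.sq_sqrt (hpos j0).le]
        rw [e1, e2, e3, e4]
        have hR : 0 ≤ ∑ m ∈ (Finset.univ.erase i0).erase j0, lam m * (z m)^2 :=
          Finset.sum_nonneg fun m _ => mul_nonneg (hpos m).le (sq_nonneg _)
        have hDpos : 0 < lam i0 * (z i0)^2 + lam j0 * (z j0)^2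
            + ∑ m ∈ (Finset.univ.erase i0).erase j0, lam m * (z m)^2 := by
          rw [← hD]; exact pow_pos (norm_pos_iff.mpr hw) 2
        have hD'pos : 0 < lam i0 * (z j0)^2 + lam j0 * (z i0)^2
            + ∑ m ∈ (Finset.univ.erase i0).erase j0, lam m * (z m)^2 := by
          rw [← hD']; exact pow_pos (norm_pos_iff.mpr hw') 2
        exact SSCM.key_ineq (lam i0) (lam j0) ((z i0)^2) ((z j0)^2) _ (hpos j0) hle
          (sq_nonneg _) (sq_nonneg _) hR hDpos hD'pos
    have hσm : Measurable (⇑σ) := σ.continuous.measurable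
    have hi2 : ∀ k, Integrable (fun z => ssign (De (σ z)) k * ssign (De (σ z)) k) F2 := by
      intro k
      refine hintF2 _ ?_ (fun z => habs _ k k)
      exact ((hsk_meas k).comp hσm).mul ((hsk_meas k).comp hσm)
    have hj := MeasureTheory.integral_mono (μ := F2)
      (Integrable.add (hprod_int j0 j0) (hi2 j0))
      (Integrable.add (hprod_int i0 i0) (hi2 i0)) hpt
    simp only [Pi.add_apply] at hj
    have ha1 := MeasureTheory.integral_add (μ := F2) (hprod_int i0 i0) (hi2 i0)
    have ha2 := MeasureTheory.integral_add (μ := F2) (hprod_int j0 j0) (hi2 j0)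
    have hc1 := hinv σ hρinv (fun z => ssign (De z) i0 * ssign (De z) i0)
    have hc2 := hinv σ hρinv (fun z => ssign (De z) j0 * ssign (De z) j0)
    linarith
  -- assembly
  refine ⟨fun k => ∫ z, ssign (De z) k * ssign (De z) k ∂F2, hpos', ?_, ?_⟩
  · intro i j hij
    rcases eq_or_ne i j with rfl | hne
    · exact le_refl _
    · exact hmono' i j hne (hmono i j hij)
  · apply Matrix.ext
    intro i j
    rw [Matrix.of_apply]
    have hstep1 : (∫ x, ssign (x - μ) i * ssign (x - μ) j ∂F)
        = ∫ z, (∑ k, U i k * ssign (De z) k) * (∑ l, U j l * ssign (De z) l) ∂F2 := by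
      rw [← hFback,
        MeasureTheory.integral_map_equiv Φ (fun x => ssign (x - μ) i * ssign (x - μ) j)]
      congr 1
      funext z
      have hwsub : Φ z - μ = Ue (De z) := by rw [hPhi z]; exact add_sub_cancel_left μ _
      rw [hwsub, SSCM.ssign_isometry Ue (De z)]
      have h1 : (Ue (ssign (De z))) i = ∑ k, U i k * ssign (De z) k := rfl
      have h2 : (Ue (ssign (De z))) j = ∑ l, U j l * ssign (De z) l := rfl
      rw [h1, h2]
    rw [hstep1]
    have hexp : ∀ z : EuclideanSpace ℝ (Fin p),
        (∑ k, U i k * ssign (De z) k) * (∑ l, U j l * ssign (De z) l)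
          = ∑ k, ∑ l, U i k * U j l * (ssign (De z) k * ssign (De z) l) := by
      intro z
      rw [Finset.sum_mul_sum]
      exact Finset.sum_congr rfl fun k _ => Finset.sum_congr rfl fun l _ => by ring
    simp only [hexp]
    rw [MeasureTheory.integral_finset_sum _
      (fun k _ => integrable_finset_sum _ (fun l _ => (hprod_int k l).const_mul _))]
    have hswap_int : ∀ k : Fin p,
        (∫ z, ∑ l, U i k * U j l * (ssign (De z) k * ssign (De z) l) ∂F2)
          = ∑ l, U i k * U j l * ∫ z, ssign (De z) k * ssign (De z) l ∂F2 := by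
      intro k
      rw [MeasureTheory.integral_finset_sum _ (fun l _ => (hprod_int k l).const_mul _)]
      exact Finset.sum_congr rfl fun l _ => MeasureTheory.integral_const_mul _ _
    simp only [hswap_int]
    have hcol : ∀ k : Fin p,
        (∑ l, U i k * U j l * ∫ z, ssign (De z) k * ssign (De z) l ∂F2)
          = U i k * U j k * ∫ z, ssign (De z) k * ssign (De z) k ∂F2 := by
      intro k
      rw [Finset.sum_eq_single k]
      · intro l _ hlk
        rw [hNoff k l (fun h => hlk h.symm), mul_zero]
      · intro hk; exact absurd (Finset.mem_univ k) hk
    simp only [hcol]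
    rw [Matrix.mul_apply]
    refine Finset.sum_congr rfl fun k _ => ?_
    rw [Matrix.mul_diagonal, Matrix.transpose_apply]
    ring
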